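/- arXiv:2602.11538 — 5 statements merged into one kernel-verified Lean document; each statement's English description precedes it below -/
import Mathlib

section
/- Let G be a group, m ∈ G, A a ℤ/2-algebra, and c : G → A a function with c(e) = 0 and c(g₁ * g₂) + c(g₁ * m * g₂) = c(g₁) * c(g₂) for all g₁, g₂ ∈ G. Then for every g ∈ G, c(g * m⁻¹) = c(g) and c(m * g * m⁻¹) = c(g). In particular, the conjugation action by the meridian m is trivial on the values of c. -/
/-- Conjugation by the meridian acts trivially on ℤ/2 cord-algebra values. -/
theorem cord_meridian_conjugation_trivial
    {G : Type*} [Group G] {A : Type*} [Ring A] [Algebra (ZMod 2) A]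
    (m : G) (c : G → A) (h1 : c 1 = 0)
    (hsk : ∀ g₁ g₂ : G, c (g₁ * g₂) + c (g₁ * m * g₂) = c g₁ * c g₂) :
    ∀ g : G, c (g * m⁻¹) = c g ∧ c (m * g * m⁻¹) = c g := by
  have h2 : (2 : A) = 0 := by
    calc (2 : A) = algebraMap (ZMod 2) A 2 := (map_ofNat _ 2).symm
      _ = algebraMap (ZMod 2) A 0 := by rw [show (2 : ZMod 2) = 0 by decide]
      _ = 0 := map_zero _
  have key : ∀ x y : A, x + y = 0 → y = x := by
    intro x y h
    have hx : x + x = 0 := by rw [← two_mul, h2, zero_mul]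
    have := eq_neg_of_add_eq_zero_right h
    have := neg_eq_of_add_eq_zero_right hx
    rw [‹y = -x›, this]
  have hR : ∀ g : G, c (g * m) = c g := by
    intro g
    have := hsk g 1
    simp [h1] at this
    exact key _ _ this
  have hL : ∀ g : G, c (m * g) = c g := by
    intro g
    have := hsk 1 g
    simp [h1] at this
    exact key _ _ this
  intro g
  have h1' : c (g * m⁻¹) = c g := by
    have := hR (g * m⁻¹)
    simpa using this.symm
  refine ⟨h1', ?_⟩
  rw [mul_assoc, hL]; exact h1'
end

section
/- Let G be a group, m ∈ G, A a ℤ/2-algebra, and c : G → A a function with c(e) = 0 and c(g₁ * g₂) + c(g₁ * m * g₂) = c(g₁) * c(g₂) for all g₁, g₂ ∈ G. Then for every k ∈ ℕ and all g₁, g₂ ∈ G, c(g₁ * m^(2k) * g₂) = c(g₁ * g₂). -/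
/-- Inserting an even power of the meridian does not change the cord-algebra value over ℤ/2. -/
theorem cord_even_meridian_power
    {G : Type*} [Group G] {A : Type*} [Ring A] [Algebra (ZMod 2) A]
    (m : G) (c : G → A) (h1 : c 1 = 0)
    (hsk : ∀ g₁ g₂ : G, c (g₁ * g₂) + c (g₁ * m * g₂) = c g₁ * c g₂) :
    ∀ (k : ℕ) (g₁ g₂ : G), c (g₁ * m ^ (2 * k) * g₂) = c (g₁ * g₂) := by
  have hchar : ∀ a : A, a + a = 0 := by
    intro a
    have h : ((1 : ZMod 2) + 1) • a = a + a := by rw [add_smul, one_smul]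
    rw [show ((1 : ZMod 2) + 1) = 0 by decide, zero_smul] at h
    exact h.symm
  -- step: c (g₁ * m * g₂) = c (g₁ * g₂) + c g₁ * c g₂
  have hstep : ∀ g₁ g₂ : G, c (g₁ * m * g₂) = c (g₁ * g₂) + c g₁ * c g₂ := by
    intro g₁ g₂
    have := hsk g₁ g₂
    have h2 : c (g₁ * g₂) + (c (g₁ * g₂) + c (g₁ * m * g₂)) = c (g₁ * g₂) + c g₁ * c g₂ := by
      rw [this]
    rwa [← add_assoc, hchar, zero_add] at h2
  -- c (g * m^j) = c g
  have hpow : ∀ (j : ℕ) (g : G), c (g * m ^ j) = c g := by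
    intro j
    induction j with
    | zero => intro g; simp
    | succ n ih =>
      intro g
      have := hstep (g * m ^ n) 1
      rw [mul_one, mul_one, h1, mul_zero, add_zero] at this
      calc c (g * m ^ (n + 1)) = c (g * m ^ n * m) := by rw [mul_assoc, pow_succ]
        _ = c (g * m ^ n) := this
        _ = c g := ih g
  intro k
  induction k with
  | zero => intro g₁ g₂; simp
  | succ n ih =>
    intro g₁ g₂
    have e1 : g₁ * m ^ (2 * (n + 1)) * g₂ = (g₁ * m ^ (2 * n + 1)) * m * g₂ := by
      rw [show 2*(n+1) = 2*n+1+1 by ring, pow_succ, ← mul_assoc]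
    have e2 : g₁ * m ^ (2 * n + 1) * g₂ = (g₁ * m ^ (2 * n)) * m * g₂ := by
      rw [pow_succ, ← mul_assoc]
    calc c (g₁ * m ^ (2 * (n + 1)) * g₂)
        = c ((g₁ * m ^ (2 * n + 1)) * m * g₂) := by rw [e1]
      _ = c (g₁ * m ^ (2 * n + 1) * g₂) + c (g₁ * m ^ (2 * n + 1)) * c g₂ := hstep _ _
      _ = c ((g₁ * m ^ (2 * n)) * m * g₂) + c g₁ * c g₂ := by rw [e2, hpow]
      _ = c (g₁ * m ^ (2 * n) * g₂) + c (g₁ * m ^ (2 * n)) * c g₂ + c g₁ * c g₂ := by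
            rw [hstep]
      _ = c (g₁ * m ^ (2 * n) * g₂) := by
            rw [hpow, add_assoc, hchar, add_zero]
      _ = c (g₁ * g₂) := ih g₁ g₂
end

section
/- Let G be a group, m ∈ G, A a ℤ/2-algebra, and c : G → A a function with c(e) = 0 and c(g₁ * g₂) + c(g₁ * m * g₂) = c(g₁) * c(g₂) for all g₁, g₂ ∈ G. Then for every k ∈ ℕ and all g₁, g₂ ∈ G, c(g₁ * m^(2k+1) * g₂) = c(g₁ * g₂) + c(g₁) * c(g₂). -/
/-- Inserting an odd power of the meridian changes the cord-algebra value by one skein term. -/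
theorem cord_odd_meridian_power
    {G : Type*} [Group G] {A : Type*} [Ring A] [Algebra (ZMod 2) A]
    (m : G) (c : G → A) (h1 : c 1 = 0)
    (hsk : ∀ g₁ g₂ : G, c (g₁ * g₂) + c (g₁ * m * g₂) = c g₁ * c g₂) :
    ∀ (k : ℕ) (g₁ g₂ : G), c (g₁ * m ^ (2 * k + 1) * g₂) = c (g₁ * g₂) + c g₁ * c g₂ := by
  have h2 : (2 : A) = 0 := by
    have h := map_natCast (algebraMap (ZMod 2) A) 2
    simp only [Nat.cast_ofNat] at h
    rw [← h, show (2 : ZMod 2) = 0 by decide, map_zero]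
  have two0 : ∀ a : A, a + a = 0 := fun a => by rw [← two_mul, h2, zero_mul]
  -- inserting one m:
  have step : ∀ g₁ g₂ : G, c (g₁ * m * g₂) = c (g₁ * g₂) + c g₁ * c g₂ := by
    intro g₁ g₂
    have := hsk g₁ g₂
    have h' : c (g₁ * g₂) + (c (g₁ * g₂) + c (g₁ * m * g₂)) = c (g₁ * g₂) + c g₁ * c g₂ := by
      rw [this]
    rwa [← add_assoc, two0, zero_add] at h'
  -- c (g * m^n) = c g
  have fix : ∀ (g : G) (n : ℕ), c (g * m ^ n) = c g := by
    intro g n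
    induction n with
    | zero => simp
    | succ n ih =>
      have := step (g * m ^ n) 1
      simp only [mul_one, h1, mul_zero, add_zero] at this
      rw [pow_succ, ← mul_assoc, this, ih]
  intro k
  induction k with
  | zero => intro g₁ g₂; simpa using step g₁ g₂
  | succ k ih =>
    intro g₁ g₂
    have e : g₁ * m ^ (2 * (k + 1) + 1) * g₂
        = g₁ * m ^ (2 * k + 1) * (m * (m * g₂)) := by
      group
    rw [e]
    have s1 : c (g₁ * m ^ (2 * k + 1) * (m * (m * g₂)))
        = c (g₁ * m ^ (2 * k + 1) * (m * g₂)) + c g₁ * c (m * g₂) := by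
      have := step (g₁ * m ^ (2 * k + 1)) (m * g₂)
      rwa [fix g₁ (2 * k + 1), mul_assoc (g₁ * m ^ (2 * k + 1)) m (m * g₂)] at this
    have s2 : c (g₁ * m ^ (2 * k + 1) * (m * g₂))
        = c (g₁ * m ^ (2 * k + 1) * g₂) + c g₁ * c g₂ := by
      have := step (g₁ * m ^ (2 * k + 1)) g₂
      rwa [fix g₁ (2 * k + 1), mul_assoc] at this
    rw [s1, s2, ih g₁ g₂]
    have cm : c (m * g₂) = c g₂ := by
      have := step 1 g₂
      simpa [h1] using this
    rw [cm]
    rw [add_assoc, two0, add_zero]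
end

section
/- Let G be the group presented as ⟨a, μ | μaμ = aμa⟩ (the trefoil knot group). In the group algebra 𝔽₂[G], the element s := (1 + μ) * a * μ⁻¹ * a⁻¹ satisfies s ≠ μ * s * μ⁻¹. -/
open MonoidAlgebra

def trefoilRel : FreeGroup Bool :=
  FreeGroup.of true * FreeGroup.of false * FreeGroup.of true *
    (FreeGroup.of false * FreeGroup.of true * FreeGroup.of false)⁻¹

def TrefoilGroup : Type := PresentedGroup ({trefoilRel} : Set (FreeGroup Bool))

instance : Group TrefoilGroup := by unfold TrefoilGroup; infer_instance

abbrev GL2 := (Matrix (Fin 2) (Fin 2) (ZMod 2))ˣ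

def matA : GL2 := ⟨!![0,1;1,0], !![0,1;1,0], by decide, by decide⟩
def matM : GL2 := ⟨!![1,1;0,1], !![1,1;0,1], by decide, by decide⟩

def trefHom : TrefoilGroup →* GL2 :=
  PresentedGroup.toGroup (f := fun b => if b then matM else matA)
    (by
      intro r hr
      simp only [Set.mem_singleton_iff] at hr
      subst hr
      simp only [trefoilRel, map_mul, map_inv, FreeGroup.lift_apply_of, if_true, if_false]
      ext : 1; decide)

noncomputable def F : MonoidAlgebra (ZMod 2) TrefoilGroup →ₐ[ZMod 2] MonoidAlgebra (ZMod 2) GL2 :=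
  MonoidAlgebra.lift (ZMod 2) (MonoidAlgebra (ZMod 2) GL2) TrefoilGroup
    ((MonoidAlgebra.of (ZMod 2) GL2).comp trefHom)

/-- In the group algebra 𝔽₂[G] of the trefoil group, the element s = (1 + μ)aμ⁻¹a⁻¹ is not
fixed by conjugation by the meridian μ. -/
theorem gramain_nontrivial_on_trefoil :
    letI a : TrefoilGroup := PresentedGroup.of false
    letI μ : TrefoilGroup := PresentedGroup.of true
    letI s : MonoidAlgebra (ZMod 2) TrefoilGroup :=
      (1 + of (ZMod 2) TrefoilGroup μ) * of (ZMod 2) TrefoilGroup a *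
        of (ZMod 2) TrefoilGroup μ⁻¹ * of (ZMod 2) TrefoilGroup a⁻¹
    s ≠ of (ZMod 2) TrefoilGroup μ * s * of (ZMod 2) TrefoilGroup μ⁻¹ := by
  intro h
  have h2 := congrArg F h
  have hA : trefHom (PresentedGroup.of false) = matA := PresentedGroup.toGroup.of ..
  have hM : trefHom (PresentedGroup.of true) = matM := PresentedGroup.toGroup.of ..
  have hF : ∀ x, F (of (ZMod 2) TrefoilGroup x) = of (ZMod 2) GL2 (trefHom x) :=
    fun x => MonoidAlgebra.lift_of ..
  have hAi : trefHom (PresentedGroup.of false)⁻¹ = matA⁻¹ := (map_inv trefHom _).trans (congrArg _ hA)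
  have hMi : trefHom (PresentedGroup.of true)⁻¹ = matM⁻¹ := (map_inv trefHom _).trans (congrArg _ hM)
  simp only [map_mul, map_add, map_one, hF, hAi, hMi] at h2
  rw [hF (PresentedGroup.of true), hF (PresentedGroup.of false), hA, hM] at h2
  simp only [MonoidAlgebra.of_apply, add_mul, mul_add, one_mul, mul_one,
    MonoidAlgebra.single_mul_single] at h2
  have h3 : (Finsupp.single (matA * matM⁻¹ * matA⁻¹) (1 : ZMod 2)
        + Finsupp.single (matM * matA * matM⁻¹ * matA⁻¹) 1 : GL2 →₀ ZMod 2)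
      = Finsupp.single (matM * (matA * matM⁻¹ * matA⁻¹) * matM⁻¹) 1
        + Finsupp.single (matM * (matM * matA * matM⁻¹ * matA⁻¹) * matM⁻¹) 1 := congrArg MonoidAlgebra.coeff h2
  have h4 := DFunLike.congr_fun h3 (matA * matM⁻¹ * matA⁻¹)
  simp only [Finsupp.add_apply, Finsupp.single_apply] at h4
  revert h4
  decide
end

section
/- Let G be a group, m ∈ G, A a ℤ/2-algebra, and c : G → A a function with c(e) = 0 and c(g₁ * g₂) + c(g₁ * m * g₂) = c(g₁) * c(g₂) for all g₁, g₂ ∈ G. Suppose φ : G → G is a group homomorphism of the form φ(g) = m^j * g * m^{-j} for some integer j. Then c ∘ φ = c. -/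
/-- Any power of the meridian conjugation acts trivially on ℤ/2 cord-algebra values. -/
theorem cord_meridian_power_conjugation_trivial
    {G : Type*} [Group G] {A : Type*} [Ring A] [Algebra (ZMod 2) A]
    (m : G) (c : G → A) (h1 : c 1 = 0)
    (hsk : ∀ g₁ g₂ : G, c (g₁ * g₂) + c (g₁ * m * g₂) = c g₁ * c g₂)
    (φ : G →* G) (j : ℤ) (hφ : ∀ g : G, φ g = m ^ j * g * m ^ (-j)) :
    c ∘ φ = c := by
  have htwo : (2 : A) = 0 := by
    have h2 : (2 : ZMod 2) = 0 := rfl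
    calc (2 : A) = algebraMap (ZMod 2) A 2 := by
          rw [map_ofNat]
      _ = 0 := by rw [h2, map_zero]
  have hadd : ∀ a : A, a + a = 0 := by
    intro a
    have : a + a = 2 * a := (two_mul a).symm
    rw [this, htwo, zero_mul]
  -- cancel: a + b = 0 → b = a
  have hcancel : ∀ a b : A, a + b = 0 → b = a := by
    intro a b h
    have h2 := congrArg (a + ·) h
    simp only [← add_assoc, hadd a, zero_add, add_zero] at h2
    exact h2
  have hleft : ∀ g : G, c (m * g) = c g := by
    intro g
    have := hsk 1 g
    rw [one_mul, one_mul, h1, zero_mul] at this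
    exact (hcancel _ _ this)
  have hright : ∀ g : G, c (g * m) = c g := by
    intro g
    have := hsk g 1
    rw [mul_one, mul_one, h1, mul_zero] at this
    exact (hcancel _ _ this)
  have hleftinv : ∀ g : G, c (m⁻¹ * g) = c g := by
    intro g
    have := hleft (m⁻¹ * g)
    rw [mul_inv_cancel_left] at this; exact this.symm
  have hrightinv : ∀ g : G, c (g * m⁻¹) = c g := by
    intro g
    have := hright (g * m⁻¹)
    rw [inv_mul_cancel_right] at this; exact this.symm
  have hleftpow : ∀ (k : ℤ) (g : G), c (m ^ k * g) = c g := by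
    intro k
    induction k using Int.induction_on with
    | zero => intro g; simp
    | succ n ih =>
        intro g
        have : m ^ ((n : ℤ) + 1) * g = m ^ (n : ℤ) * (m * g) := by
          rw [zpow_add_one, mul_assoc]
        rw [this, ih, hleft]
    | pred n ih =>
        intro g
        have : m ^ (-(n : ℤ) - 1) * g = m ^ (-(n : ℤ)) * (m⁻¹ * g) := by
          rw [zpow_sub_one, mul_assoc]
        rw [this, ih, hleftinv]
  have hrightpow : ∀ (k : ℤ) (g : G), c (g * m ^ k) = c g := by
    intro k
    induction k using Int.induction_on with
    | zero => intro g; simp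
    | succ n ih =>
        intro g
        have : g * m ^ ((n : ℤ) + 1) = g * m ^ (n : ℤ) * m := by
          rw [zpow_add_one, mul_assoc]
        rw [this, hright, ih]
    | pred n ih =>
        intro g
        have : g * m ^ (-(n : ℤ) - 1) = g * m ^ (-(n : ℤ)) * m⁻¹ := by
          rw [zpow_sub_one, mul_assoc]
        rw [this, hrightinv, ih]
  funext g
  simp only [Function.comp_apply, hφ g]
  rw [hrightpow, hleftpow]
end
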